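/- Define η : [1,∞) → ℝ depending on a parameter n > 0 by η(r) = n(r-1) for r ∈ [1, 1+1/n), η(r) = 1 for r ∈ [1+1/n, √2), and η(r) = e^{2√2/3}·e^{-2r/3} for r ∈ [√2, ∞). Then for all sufficiently large n, 16∫₁^∞ η(r)² (1 - r⁻¹) dr + 4∫₁^∞ η'(r)² (1 - r⁻¹) dr - 16∫₁^∞ η(r)² r⁻¹ dr < 0. -/

import Mathlib

open MeasureTheory Set

-- tangent line lower bound for r⁻¹
lemma inv_ge_tangent (c r : ℝ) (hc : 0 < c) (hr : 0 < r) : 2/c - r/c^2 ≤ r⁻¹ := by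
  have key : (2/c - r/c^2) * r ≤ 1 := by
    rw [div_sub_div _ _ hc.ne' (by positivity : (c:ℝ)^2 ≠ 0), div_mul_eq_mul_div,
      div_le_one (by positivity)]
    nlinarith [sq_nonneg (r - c)]
  rw [inv_eq_one_div, le_div_iff₀ hr]
  exact key

-- integrability of exp(-(4/3)r)*(α+βr) on Ioi s, s ≥ 0
lemma tailIntegrableLin (α β s : ℝ) (hs : 0 ≤ s) :
    IntegrableOn (fun r => Real.exp (-(4/3) * r) * (α + β * r)) (Set.Ioi s) := by
  have hint : IntegrableOn (fun r => (|α| + 3*|β|) * Real.exp (-(1:ℝ) * r)) (Set.Ioi s) :=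
    (exp_neg_integrableOn_Ioi s (by norm_num : (0:ℝ) < 1)).const_mul _
  refine hint.mono' ?_ ?_
  · exact (Continuous.aestronglyMeasurable (by continuity)).restrict
  · filter_upwards [ae_restrict_mem measurableSet_Ioi] with r hr
    have hr0 : 0 ≤ r := hs.trans (le_of_lt hr)
    have h1 : Real.exp (r/3) ≥ 1 := Real.one_le_exp (by positivity)
    have h2 : r/3 + 1 ≤ Real.exp (r/3) := Real.add_one_le_exp _
    have h3 : |α + β * r| ≤ (|α| + 3*|β|) * Real.exp (r/3) := by
      calc |α + β * r| ≤ |α| + |β| * r := by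
            calc |α + β * r| ≤ |α| + |β * r| := abs_add_le _ _
            _ = |α| + |β| * r := by rw [abs_mul, abs_of_nonneg hr0]
        _ ≤ (|α| + 3*|β|) * Real.exp (r/3) := by nlinarith [abs_nonneg α, abs_nonneg β]
    have h4 : Real.exp (-(4/3) * r) * Real.exp (r/3) = Real.exp (-(1:ℝ) * r) := by
      rw [← Real.exp_add]; ring_nf
    rw [Real.norm_eq_abs, abs_mul, abs_of_pos (Real.exp_pos _)]
    calc Real.exp (-(4/3) * r) * |α + β * r|
        ≤ Real.exp (-(4/3) * r) * ((|α| + 3*|β|) * Real.exp (r/3)) := by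
          exact mul_le_mul_of_nonneg_left h3 (Real.exp_pos _).le
      _ = (|α| + 3*|β|) * Real.exp (-(1:ℝ) * r) := by rw [← h4]; ring

-- FTC value of the tail integral
lemma tailIntegralLin (α β s : ℝ) (hs : 0 ≤ s) :
    ∫ r in Set.Ioi s, Real.exp (-(4/3) * r) * (α + β * r)
      = Real.exp (-(4/3) * s) * ((3*α/4 + 9*β/16) + (3*β/4) * s) := by
  have hF : ∀ x ∈ Set.Ici s, HasDerivAt
      (fun r => -(Real.exp (-(4/3)*r) * ((3*α/4 + 9*β/16) + (3*β/4)*r)))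
      (Real.exp (-(4/3)*x) * (α + β*x)) x := by
    intro x _
    have h1 : HasDerivAt (fun r : ℝ => -(4/3)*r) (-(4/3)) x := by
      simpa using (hasDerivAt_id x).const_mul (-(4/3) : ℝ)
    have h2 : HasDerivAt (fun r => Real.exp (-(4/3)*r)) (Real.exp (-(4/3)*x) * (-(4/3))) x :=
      (Real.hasDerivAt_exp _).comp x h1
    have h3 : HasDerivAt (fun r : ℝ => (3*α/4 + 9*β/16) + (3*β/4)*r) (3*β/4) x := by
      simpa using ((hasDerivAt_id x).const_mul (3*β/4 : ℝ)).const_add (3*α/4 + 9*β/16)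
    have := (h2.mul h3).neg
    exact this.congr_deriv (by ring)
  have htendexp : Filter.Tendsto (fun x : ℝ => Real.exp (-(4/3)*x)) Filter.atTop (nhds 0) := by
    have := tendsto_rpow_mul_exp_neg_mul_atTop_nhds_zero 0 (4/3) (by norm_num)
    simpa [Real.rpow_zero, neg_mul] using this
  have htendx : Filter.Tendsto (fun x : ℝ => x * Real.exp (-(4/3)*x)) Filter.atTop (nhds 0) := by
    have := tendsto_rpow_mul_exp_neg_mul_atTop_nhds_zero 1 (4/3) (by norm_num)
    simpa [Real.rpow_one, neg_mul] using this
  have htend : Filter.Tendsto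
      (fun r => -(Real.exp (-(4/3)*r) * ((3*α/4 + 9*β/16) + (3*β/4)*r)))
      Filter.atTop (nhds 0) := by
    have : Filter.Tendsto
        (fun r : ℝ => -((3*α/4 + 9*β/16) * Real.exp (-(4/3)*r) + (3*β/4) * (r * Real.exp (-(4/3)*r))))
        Filter.atTop (nhds (-((3*α/4 + 9*β/16) * 0 + (3*β/4) * 0))) :=
      ((htendexp.const_mul _).add (htendx.const_mul _)).neg
    simpa using this.congr (fun r => by ring)
  have := integral_Ioi_of_hasDerivAt_of_tendsto' hF (tailIntegrableLin α β s hs) htend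
  rw [this]; ring

-- ∫ over Ico of a linear function
lemma midIntegral (p q A B : ℝ) (hAB : A ≤ B) :
    ∫ r in Set.Ico A B, (p + q * r) = p*(B-A) + q*(B^2-A^2)/2 := by
  rw [integral_Ico_eq_integral_Ioo, ← integral_Ioc_eq_integral_Ioo,
      ← intervalIntegral.integral_of_le hAB]
  have hd : ∀ x ∈ Set.uIcc A B, HasDerivAt (fun r => p*r + q*r^2/2) (p + q*x) x := by
    intro x _
    have h1 : HasDerivAt (fun r : ℝ => p*r) p x := by
      simpa using (hasDerivAt_id x).const_mul p
    have h2 : HasDerivAt (fun r : ℝ => q*r^2/2) (q*x) x := by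
      have := ((hasDerivAt_pow 2 x).const_mul q).div_const 2
      simpa using this.congr_deriv (by ring)
    exact h1.add h2
  rw [intervalIntegral.integral_eq_sub_of_hasDerivAt hd
    ((continuous_const.add (continuous_const.mul continuous_id)).intervalIntegrable A B)]
  ring

lemma tailIntegrableBdd (K u v s : ℝ) (hs : 1 ≤ s) :
    IntegrableOn (fun r => K * (Real.exp (-(4/3)*r) * (u + v * r⁻¹))) (Set.Ici s) := by
  rw [integrableOn_Ici_iff_integrableOn_Ioi]
  have hint : IntegrableOn (fun r => (|K| * (|u| + |v|)) * Real.exp (-(4/3) * r)) (Set.Ioi s) :=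
    (exp_neg_integrableOn_Ioi s (by norm_num : (0:ℝ) < 4/3)).const_mul _
  refine hint.mono' ?_ ?_
  · refine (ContinuousOn.aestronglyMeasurable ?_ measurableSet_Ioi)
    refine continuousOn_const.mul ((Real.continuous_exp.comp (by continuity)).continuousOn.mul
      (continuousOn_const.add (continuousOn_const.mul (continuousOn_id.inv₀ ?_))))
    intro x hx
    have h1 : (1:ℝ) < x := lt_of_le_of_lt hs hx
    exact ne_of_gt (show (0:ℝ) < id x from by simp only [id_eq]; linarith)
  · filter_upwards [ae_restrict_mem measurableSet_Ioi] with r hr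
    have hr1 : 1 < r := lt_of_le_of_lt hs hr
    have hri0 : 0 < r⁻¹ := inv_pos.mpr (by linarith)
    have hri1 : r⁻¹ ≤ 1 := by
      rw [inv_eq_one_div, div_le_one (by linarith)]; linarith
    have habs : |u + v * r⁻¹| ≤ |u| + |v| := by
      calc |u + v * r⁻¹| ≤ |u| + |v * r⁻¹| := abs_add_le _ _
        _ = |u| + |v| * r⁻¹ := by rw [abs_mul, abs_of_pos hri0]
        _ ≤ |u| + |v| := by nlinarith [abs_nonneg v]
    rw [Real.norm_eq_abs, abs_mul, abs_mul, abs_of_pos (Real.exp_pos _)]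
    calc |K| * (Real.exp (-(4/3)*r) * |u + v * r⁻¹|)
        ≤ |K| * (Real.exp (-(4/3)*r) * (|u| + |v|)) := by
          refine mul_le_mul_of_nonneg_left (mul_le_mul_of_nonneg_left habs (Real.exp_pos _).le) (abs_nonneg K)
      _ = |K| * (|u| + |v|) * Real.exp (-(4/3) * r) := by ring

lemma tailLe (K u v α β s : ℝ) (hs : 1 ≤ s) (hK : 0 ≤ K)
    (hpt : ∀ r : ℝ, s ≤ r → u + v * r⁻¹ ≤ α + β * r) :
    ∫ r in Set.Ici s, K * (Real.exp (-(4/3)*r) * (u + v * r⁻¹))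
      ≤ K * (Real.exp (-(4/3) * s) * ((3*α/4 + 9*β/16) + (3*β/4) * s)) := by
  have h1 : ∫ r in Set.Ici s, K * (Real.exp (-(4/3)*r) * (u + v * r⁻¹))
      ≤ ∫ r in Set.Ici s, K * (Real.exp (-(4/3)*r) * (α + β * r)) := by
    refine setIntegral_mono_on (tailIntegrableBdd K u v s hs)
      ((integrableOn_Ici_iff_integrableOn_Ioi).mpr
        ((tailIntegrableLin α β s (by linarith)).const_mul K))
      measurableSet_Ici (fun x hx => ?_)
    exact mul_le_mul_of_nonneg_left
      (mul_le_mul_of_nonneg_left (hpt x hx) (Real.exp_pos _).le) hK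
  refine h1.trans ?_
  rw [integral_Ici_eq_integral_Ioi, MeasureTheory.integral_const_mul,
    tailIntegralLin α β s (by linarith)]

lemma tailGe (K u v α β s : ℝ) (hs : 1 ≤ s) (hK : 0 ≤ K)
    (hpt : ∀ r : ℝ, s ≤ r → α + β * r ≤ u + v * r⁻¹) :
    K * (Real.exp (-(4/3) * s) * ((3*α/4 + 9*β/16) + (3*β/4) * s))
      ≤ ∫ r in Set.Ici s, K * (Real.exp (-(4/3)*r) * (u + v * r⁻¹)) := by
  have h1 : ∫ r in Set.Ici s, K * (Real.exp (-(4/3)*r) * (α + β * r))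
      ≤ ∫ r in Set.Ici s, K * (Real.exp (-(4/3)*r) * (u + v * r⁻¹)) := by
    refine setIntegral_mono_on
      ((integrableOn_Ici_iff_integrableOn_Ioi).mpr
        ((tailIntegrableLin α β s (by linarith)).const_mul K))
      (tailIntegrableBdd K u v s hs)
      measurableSet_Ici (fun x hx => ?_)
    exact mul_le_mul_of_nonneg_left
      (mul_le_mul_of_nonneg_left (hpt x hx) (Real.exp_pos _).le) hK
  refine le_trans (le_of_eq ?_) h1
  rw [integral_Ici_eq_integral_Ioi, MeasureTheory.integral_const_mul,
    tailIntegralLin α β s (by linarith)]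

set_option maxHeartbeats 1600000 in
theorem stmt3 : ∃ N : ℝ, 0 < N ∧ ∀ n : ℝ, N ≤ n →
    (fun (η ηd : ℝ → ℝ) =>
      16 * (∫ r in Set.Ioi (1:ℝ), η r ^ 2 * (1 - r⁻¹))
        + 4 * (∫ r in Set.Ioi (1:ℝ), ηd r ^ 2 * (1 - r⁻¹))
        - 16 * (∫ r in Set.Ioi (1:ℝ), η r ^ 2 * r⁻¹) < 0)
      (fun r => if r < 1 + 1/n then n * (r - 1)
        else if r < Real.sqrt 2 then 1
        else Real.exp (2 * Real.sqrt 2 / 3) * Real.exp (-2 * r / 3))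
      (fun r => if r < 1 + 1/n then n
        else if r < Real.sqrt 2 then 0
        else (-2/3) * (Real.exp (2 * Real.sqrt 2 / 3) * Real.exp (-2 * r / 3))) := by
  refine ⟨100, by norm_num, fun n hn => ?_⟩
  simp only
  have hn0 : (0:ℝ) < n := lt_of_lt_of_le (by norm_num) hn
  have hinv0 : 0 < 1/n := by positivity
  have hinv : 1/n ≤ 1/100 := by
    rw [div_le_div_iff₀ hn0 (by norm_num)]; linarith
  have h1a : (1:ℝ) < 1 + 1/n := by linarith
  have hs2 : Real.sqrt 2 ^ 2 = 2 := Real.sq_sqrt (by norm_num)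
  have hs0 : (0:ℝ) < Real.sqrt 2 := Real.sqrt_pos.mpr (by norm_num)
  have hslb : (1.414:ℝ) < Real.sqrt 2 := by nlinarith
  have hsub : Real.sqrt 2 < 1.4143 := by nlinarith
  have has : 1 + 1/n < Real.sqrt 2 := by linarith
  have hs1 : (1:ℝ) ≤ Real.sqrt 2 := by linarith
  have hnn : n * (1/n) = 1 := by field_simp
  set F1 : ℝ → ℝ := fun r => (if r < 1 + 1/n then n * (r - 1)
        else if r < Real.sqrt 2 then 1
        else Real.exp (2 * Real.sqrt 2 / 3) * Real.exp (-2 * r / 3)) ^ 2 * (1 - r⁻¹) with hF1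
  set F2 : ℝ → ℝ := fun r => (if r < 1 + 1/n then n
        else if r < Real.sqrt 2 then 0
        else (-2/3) * (Real.exp (2 * Real.sqrt 2 / 3) * Real.exp (-2 * r / 3))) ^ 2 * (1 - r⁻¹) with hF2
  set F3 : ℝ → ℝ := fun r => (if r < 1 + 1/n then n * (r - 1)
        else if r < Real.sqrt 2 then 1
        else Real.exp (2 * Real.sqrt 2 / 3) * Real.exp (-2 * r / 3)) ^ 2 * r⁻¹ with hF3
  -- continuity helper for r⁻¹
  have hcontinv : ContinuousOn (fun r : ℝ => r⁻¹) (Set.Ici (1:ℝ)) :=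
    continuousOn_id.inv₀ (fun x hx => ne_of_gt (show (0:ℝ) < id x from by
      simp only [id_eq]; linarith [hx.out]))
  have hsub1 : Set.Icc (1:ℝ) (1+1/n) ⊆ Set.Ici 1 := fun x hx => hx.1
  have hsub2 : Set.Icc (1+1/n) (Real.sqrt 2) ⊆ Set.Ici 1 := fun x hx => le_trans (le_of_lt h1a) hx.1
  -- exp square helper
  have hsq : ∀ x : ℝ, Real.exp x ^ 2 = Real.exp (x + x) := fun x => by
    rw [Real.exp_add, sq]
  have hee : 2 * Real.sqrt 2 / 3 + 2 * Real.sqrt 2 / 3 = 4 * Real.sqrt 2 / 3 := by ring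
  have hE1 : ∀ X : ℝ, Real.exp (4 * Real.sqrt 2 / 3) * (Real.exp (-(4/3) * Real.sqrt 2) * X) = X := by
    intro X
    rw [← mul_assoc, ← Real.exp_add,
      show 4 * Real.sqrt 2 / 3 + -(4/3) * Real.sqrt 2 = 0 from by ring, Real.exp_zero, one_mul]
  -- splitting lemma
  have hsplit : ∀ f : ℝ → ℝ, IntegrableOn f (Set.Ioo 1 (1+1/n)) →
      IntegrableOn f (Set.Ico (1+1/n) (Real.sqrt 2)) → IntegrableOn f (Set.Ici (Real.sqrt 2)) →
      ∫ r in Set.Ioi (1:ℝ), f r = (∫ r in Set.Ioo (1:ℝ) (1+1/n), f r)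
        + (∫ r in Set.Ico (1+1/n) (Real.sqrt 2), f r) + (∫ r in Set.Ici (Real.sqrt 2), f r) := by
    intro f i1 i2 i3
    have d1 : Disjoint (Set.Ico (1+1/n) (Real.sqrt 2)) (Set.Ici (Real.sqrt 2)) := by
      rw [Set.disjoint_left]; rintro x ⟨_, h2⟩ h3; exact absurd h3 (not_le.mpr h2)
    have d2 : Disjoint (Set.Ioo (1:ℝ) (1+1/n)) (Set.Ici (1+1/n)) := by
      rw [Set.disjoint_left]; rintro x ⟨_, h2⟩ h3; exact absurd h3 (not_le.mpr h2)
    have hu : Set.Ico (1+1/n) (Real.sqrt 2) ∪ Set.Ici (Real.sqrt 2) = Set.Ici (1+1/n) :=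
      Set.Ico_union_Ici_eq_Ici has.le
    have i23 : IntegrableOn f (Set.Ici (1+1/n)) := by rw [← hu]; exact i2.union i3
    rw [← Set.Ioo_union_Ici_eq_Ioi h1a, setIntegral_union d2 measurableSet_Ici i1 i23, ← hu,
        setIntegral_union d1 measurableSet_Ici i2 i3, add_assoc]
  -- closed forms and EqOn facts
  have e11 : Set.EqOn (fun r : ℝ => (n*(r-1))^2 * (1 - r⁻¹)) F1 (Set.Ioo 1 (1+1/n)) := by
    intro r hr; simp only [hF1, if_pos hr.2]
  have e21 : Set.EqOn (fun r : ℝ => 1 - r⁻¹) F1 (Set.Ico (1+1/n) (Real.sqrt 2)) := by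
    intro r hr; simp only [hF1, if_neg (not_lt.mpr hr.1), if_pos hr.2, one_pow, one_mul]
  have e31 : Set.EqOn (fun r : ℝ => Real.exp (4 * Real.sqrt 2 / 3) *
      (Real.exp (-(4/3)*r) * (1 + (-1) * r⁻¹))) F1 (Set.Ici (Real.sqrt 2)) := by
    intro r hr
    have hra : ¬ r < 1 + 1/n := not_lt.mpr (le_trans has.le hr.out)
    have hrs : ¬ r < Real.sqrt 2 := not_lt.mpr hr.out
    simp only [hF1, if_neg hra, if_neg hrs]
    rw [mul_pow, hsq, hsq, hee, show -2*r/3 + -2*r/3 = -(4/3)*r from by ring]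
    ring
  have e12 : Set.EqOn (fun r : ℝ => n^2 * (1 - r⁻¹)) F2 (Set.Ioo 1 (1+1/n)) := by
    intro r hr; simp only [hF2, if_pos hr.2]
  have e22 : Set.EqOn (fun _ : ℝ => (0:ℝ)) F2 (Set.Ico (1+1/n) (Real.sqrt 2)) := by
    intro r hr
    simp only [hF2, if_neg (not_lt.mpr hr.1), if_pos hr.2]
    norm_num
  have e32 : Set.EqOn (fun r : ℝ => (4/9 * Real.exp (4 * Real.sqrt 2 / 3)) *
      (Real.exp (-(4/3)*r) * (1 + (-1) * r⁻¹))) F2 (Set.Ici (Real.sqrt 2)) := by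
    intro r hr
    have hra : ¬ r < 1 + 1/n := not_lt.mpr (le_trans has.le hr.out)
    have hrs : ¬ r < Real.sqrt 2 := not_lt.mpr hr.out
    simp only [hF2, if_neg hra, if_neg hrs]
    rw [mul_pow, mul_pow, hsq, hsq, hee, show -2*r/3 + -2*r/3 = -(4/3)*r from by ring]
    ring
  have e13 : Set.EqOn (fun r : ℝ => (n*(r-1))^2 * r⁻¹) F3 (Set.Ioo 1 (1+1/n)) := by
    intro r hr; simp only [hF3, if_pos hr.2]
  have e23 : Set.EqOn (fun r : ℝ => r⁻¹) F3 (Set.Ico (1+1/n) (Real.sqrt 2)) := by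
    intro r hr; simp only [hF3, if_neg (not_lt.mpr hr.1), if_pos hr.2, one_pow, one_mul]
  have e33 : Set.EqOn (fun r : ℝ => Real.exp (4 * Real.sqrt 2 / 3) *
      (Real.exp (-(4/3)*r) * (0 + 1 * r⁻¹))) F3 (Set.Ici (Real.sqrt 2)) := by
    intro r hr
    have hra : ¬ r < 1 + 1/n := not_lt.mpr (le_trans has.le hr.out)
    have hrs : ¬ r < Real.sqrt 2 := not_lt.mpr hr.out
    simp only [hF3, if_neg hra, if_neg hrs]
    rw [mul_pow, hsq, hsq, hee, show -2*r/3 + -2*r/3 = -(4/3)*r from by ring]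
    ring
  -- integrability of closed forms
  have int_g11 : IntegrableOn (fun r : ℝ => (n*(r-1))^2 * (1 - r⁻¹)) (Set.Ioo 1 (1+1/n)) := by
    refine (ContinuousOn.integrableOn_Icc ?_).mono_set Set.Ioo_subset_Icc_self
    exact (((continuous_const.mul (continuous_id.sub continuous_const)).pow 2).continuousOn).mul
      (continuousOn_const.sub (hcontinv.mono hsub1))
  have int_g12 : IntegrableOn (fun r : ℝ => n^2 * (1 - r⁻¹)) (Set.Ioo 1 (1+1/n)) := by
    refine (ContinuousOn.integrableOn_Icc ?_).mono_set Set.Ioo_subset_Icc_self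
    exact continuousOn_const.mul (continuousOn_const.sub (hcontinv.mono hsub1))
  have int_g13 : IntegrableOn (fun r : ℝ => (n*(r-1))^2 * r⁻¹) (Set.Ioo 1 (1+1/n)) := by
    refine (ContinuousOn.integrableOn_Icc ?_).mono_set Set.Ioo_subset_Icc_self
    exact (((continuous_const.mul (continuous_id.sub continuous_const)).pow 2).continuousOn).mul
      (hcontinv.mono hsub1)
  have int_g21 : IntegrableOn (fun r : ℝ => 1 - r⁻¹) (Set.Ico (1+1/n) (Real.sqrt 2)) := by
    refine (ContinuousOn.integrableOn_Icc ?_).mono_set Set.Ico_subset_Icc_self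
    exact continuousOn_const.sub (hcontinv.mono hsub2)
  have int_g23 : IntegrableOn (fun r : ℝ => r⁻¹) (Set.Ico (1+1/n) (Real.sqrt 2)) := by
    refine (ContinuousOn.integrableOn_Icc ?_).mono_set Set.Ico_subset_Icc_self
    exact hcontinv.mono hsub2
  have int_lin : ∀ (p q A B : ℝ), IntegrableOn (fun r : ℝ => p + q * r) (Set.Ioo A B) := by
    intro p q A B
    exact ((continuous_const.add (continuous_const.mul continuous_id)).integrableOn_Icc).mono_set
      Set.Ioo_subset_Icc_self
  have int_lin' : ∀ (p q A B : ℝ), IntegrableOn (fun r : ℝ => p + q * r) (Set.Ico A B) := by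
    intro p q A B
    exact ((continuous_const.add (continuous_const.mul continuous_id)).integrableOn_Icc).mono_set
      Set.Ico_subset_Icc_self
  -- tangent facts
  have tan1 : ∀ x : ℝ, 1 < x → 1 - x⁻¹ ≤ x - 1 := by
    intro x hx
    have h := inv_ge_tangent 1 x one_pos (by linarith)
    norm_num at h
    linarith
  have tan65 : ∀ x : ℝ, 1 < x → 5/3 - (25/36) * x ≤ x⁻¹ := by
    intro x hx
    have h := inv_ge_tangent (6/5) x (by norm_num) (by linarith)
    norm_num at h
    linarith
  have tan115 : ∀ x : ℝ, 1 < x → 10/11 - (25/121) * x ≤ x⁻¹ := by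
    intro x hx
    have h := inv_ge_tangent (11/5) x (by norm_num) (by linarith)
    norm_num at h
    linarith
  have hinvle1 : ∀ x : ℝ, 1 < x → x⁻¹ ≤ 1 := by
    intro x hx
    rw [inv_eq_one_div, div_le_one (by linarith)]
    linarith
  -- ===== J1 =====
  have hJ1 : (∫ r in Set.Ioi (1:ℝ), F1 r) ≤ (1+1/n-1) * (1/n)
      + ((-2/3)*(Real.sqrt 2 - (1+1/n)) + (25/36)*(2-(1+1/n)^2)/2)
      + ((3*(1/11)/4 + 9*(25/121)/16) + (3*(25/121)/4) * Real.sqrt 2) := by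
    rw [hsplit F1 (int_g11.congr_fun e11 measurableSet_Ioo)
      (int_g21.congr_fun e21 measurableSet_Ico) ((tailIntegrableBdd _ 1 (-1) _ hs1).congr_fun e31 measurableSet_Ici)]
    have p1 : (∫ r in Set.Ioo (1:ℝ) (1+1/n), F1 r) ≤ (1+1/n-1) * (1/n) := by
      rw [← setIntegral_congr_fun measurableSet_Ioo e11]
      have hmono : (∫ r in Set.Ioo (1:ℝ) (1+1/n), (n*(r-1))^2 * (1 - r⁻¹))
          ≤ ∫ _ in Set.Ioo (1:ℝ) (1+1/n), (1/n : ℝ) := by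
        refine setIntegral_mono_on int_g11
          ((integrableOn_const_iff (C := (1/n : ℝ))).mpr (Or.inr (by rw [Real.volume_Ioo]; exact ENNReal.ofReal_lt_top)))
          measurableSet_Ioo ?_
        intro x hx
        have hx1 : 1 < x := hx.1
        have hx2 : x < 1 + 1/n := hx.2
        have h1 := tan1 x hx1
        have h0 : 0 ≤ 1 - x⁻¹ := by linarith [hinvle1 x hx1]
        have hb0 : 0 ≤ n * (x - 1) := by nlinarith
        have hb1 : n * (x - 1) ≤ 1 := by nlinarith
        have hsq1 : (n*(x-1))^2 ≤ 1 := by nlinarith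
        calc (n*(x-1))^2 * (1 - x⁻¹) ≤ 1 * (1 - x⁻¹) := mul_le_mul_of_nonneg_right hsq1 h0
          _ = 1 - x⁻¹ := one_mul _
          _ ≤ x - 1 := h1
          _ ≤ 1/n := by linarith
      refine hmono.trans (le_of_eq ?_)
      rw [setIntegral_const, Real.volume_real_Ioo, max_eq_left (by linarith), smul_eq_mul]
    have p2 : (∫ r in Set.Ico (1+1/n) (Real.sqrt 2), F1 r)
        ≤ (-2/3)*(Real.sqrt 2 - (1+1/n)) + (25/36)*(2-(1+1/n)^2)/2 := by
      rw [← setIntegral_congr_fun measurableSet_Ico e21]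
      have hmono : (∫ r in Set.Ico (1+1/n) (Real.sqrt 2), (1 - r⁻¹))
          ≤ ∫ r in Set.Ico (1+1/n) (Real.sqrt 2), (-2/3 + (25/36) * r) := by
        refine setIntegral_mono_on int_g21 (int_lin' _ _ _ _) measurableSet_Ico ?_
        intro x hx
        have hx1 : 1 < x := lt_of_lt_of_le h1a hx.1
        linarith [tan65 x hx1]
      refine hmono.trans (le_of_eq ?_)
      rw [midIntegral _ _ _ _ has.le, hs2]
    have p3 : (∫ r in Set.Ici (Real.sqrt 2), F1 r)
        ≤ (3*(1/11)/4 + 9*(25/121)/16) + (3*(25/121)/4) * Real.sqrt 2 := by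
      rw [← setIntegral_congr_fun measurableSet_Ici e31]
      have := tailLe (Real.exp (4 * Real.sqrt 2 / 3)) 1 (-1) (1/11) (25/121) (Real.sqrt 2)
        hs1 (Real.exp_pos _).le (fun r hr => by
          have hr1 : 1 < r := lt_of_lt_of_le (show (1:ℝ) < Real.sqrt 2 by linarith) hr
          linarith [tan115 r hr1])
      rw [hE1] at this
      exact this
    linarith
  -- ===== J2 =====
  have hJ2 : (∫ r in Set.Ioi (1:ℝ), F2 r) ≤ 1/2
      + (4/9) * ((3*(1/11)/4 + 9*(25/121)/16) + (3*(25/121)/4) * Real.sqrt 2) := by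
    rw [hsplit F2 (int_g12.congr_fun e12 measurableSet_Ioo)
      (((integrableOn_const_iff (C := (0 : ℝ))).mpr (Or.inr (by
        rw [Real.volume_Ico]; exact ENNReal.ofReal_lt_top))).congr_fun e22 measurableSet_Ico)
      ((tailIntegrableBdd _ 1 (-1) _ hs1).congr_fun e32 measurableSet_Ici)]
    have p1 : (∫ r in Set.Ioo (1:ℝ) (1+1/n), F2 r) ≤ 1/2 := by
      rw [← setIntegral_congr_fun measurableSet_Ioo e12]
      have hmono : (∫ r in Set.Ioo (1:ℝ) (1+1/n), n^2 * (1 - r⁻¹))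
          ≤ ∫ r in Set.Ioo (1:ℝ) (1+1/n), (-n^2 + n^2 * r) := by
        refine setIntegral_mono_on int_g12 (int_lin _ _ _ _) measurableSet_Ioo ?_
        intro x hx
        have hx1 : 1 < x := hx.1
        calc n^2 * (1 - x⁻¹) ≤ n^2 * (x - 1) :=
              mul_le_mul_of_nonneg_left (tan1 x hx1) (sq_nonneg n)
          _ = -n^2 + n^2 * x := by ring
      refine hmono.trans (le_of_eq ?_)
      rw [← integral_Ico_eq_integral_Ioo, midIntegral _ _ _ _ (le_of_lt h1a)]
      field_simp
      ring
    have p2 : (∫ r in Set.Ico (1+1/n) (Real.sqrt 2), F2 r) ≤ 0 := by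
      rw [← setIntegral_congr_fun measurableSet_Ico e22]
      simp
    have p3 : (∫ r in Set.Ici (Real.sqrt 2), F2 r)
        ≤ (4/9) * ((3*(1/11)/4 + 9*(25/121)/16) + (3*(25/121)/4) * Real.sqrt 2) := by
      rw [← setIntegral_congr_fun measurableSet_Ici e32]
      have := tailLe (4/9 * Real.exp (4 * Real.sqrt 2 / 3)) 1 (-1) (1/11) (25/121) (Real.sqrt 2)
        hs1 (by positivity) (fun r hr => by
          have hr1 : 1 < r := lt_of_lt_of_le (show (1:ℝ) < Real.sqrt 2 by linarith) hr
          linarith [tan115 r hr1])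
      rw [mul_assoc, hE1] at this
      exact this
    linarith
  -- ===== J3 =====
  have hJ3 : 0 + ((5/3)*(Real.sqrt 2 - (1+1/n)) + (-25/36)*(2-(1+1/n)^2)/2)
      + ((3*(10/11)/4 + 9*(-25/121)/16) + (3*(-25/121)/4) * Real.sqrt 2)
      ≤ (∫ r in Set.Ioi (1:ℝ), F3 r) := by
    rw [hsplit F3 (int_g13.congr_fun e13 measurableSet_Ioo)
      (int_g23.congr_fun e23 measurableSet_Ico)
      ((tailIntegrableBdd _ 0 1 _ hs1).congr_fun e33 measurableSet_Ici)]
    have p1 : (0:ℝ) ≤ ∫ r in Set.Ioo (1:ℝ) (1+1/n), F3 r := by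
      refine setIntegral_nonneg measurableSet_Ioo ?_
      intro x hx
      simp only [hF3]
      exact mul_nonneg (sq_nonneg _) (inv_nonneg.mpr (by linarith [hx.1]))
    have p2 : (5/3)*(Real.sqrt 2 - (1+1/n)) + (-25/36)*(2-(1+1/n)^2)/2
        ≤ ∫ r in Set.Ico (1+1/n) (Real.sqrt 2), F3 r := by
      rw [← setIntegral_congr_fun measurableSet_Ico e23]
      have hmono : (∫ r in Set.Ico (1+1/n) (Real.sqrt 2), (5/3 + (-25/36) * r))
          ≤ ∫ r in Set.Ico (1+1/n) (Real.sqrt 2), r⁻¹ := by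
        refine setIntegral_mono_on (int_lin' _ _ _ _) int_g23 measurableSet_Ico ?_
        intro x hx
        have hx1 : 1 < x := lt_of_lt_of_le h1a hx.1
        linarith [tan65 x hx1]
      refine le_trans (le_of_eq ?_) hmono
      rw [midIntegral _ _ _ _ has.le, hs2]
    have p3 : (3*(10/11)/4 + 9*(-25/121)/16) + (3*(-25/121)/4) * Real.sqrt 2
        ≤ ∫ r in Set.Ici (Real.sqrt 2), F3 r := by
      rw [← setIntegral_congr_fun measurableSet_Ici e33]
      have := tailGe (Real.exp (4 * Real.sqrt 2 / 3)) 0 1 (10/11) (-25/121) (Real.sqrt 2)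
        hs1 (Real.exp_pos _).le (fun r hr => by
          have hr1 : 1 < r := lt_of_lt_of_le (show (1:ℝ) < Real.sqrt 2 by linarith) hr
          linarith [tan115 r hr1])
      rw [hE1] at this
      exact this
    linarith
  -- ===== conclusion =====
  nlinarith [hJ1, hJ2, hJ3, hslb, hsub, hinv, hinv0, hnn,
    sq_nonneg (1/n), mul_le_mul_of_nonneg_left hinv (le_of_lt hinv0)]
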